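/- The ℚ-vector space Z_q°[1] equals the ℚ-span of the brackets with all entries at least 2: Z_q°[1] = ⟨ [s_1,…,s_l] : l ≥ 0, s_1,…,s_l ≥ 2 ⟩_ℚ. Moreover this space also equals the ℚ-span of the Bradley–Zhao series ζ^BZ_q(s_1,…,s_l) := ζ_q(s_1,…,s_l; t^{s_1−1},…,t^{s_l−1}) with all s_j ≥ 2. -/

import Mathlib

/-- The q-analogue ζ_q(s_1,…,s_l;Q_1,…,Q_l) ∈ ℚ[[q]], defined coefficientwise:
the coefficient of q^m is the (convergent, since each summand with n_1 > m
contributes 0 once Q_1 has no constant term) sum over strictly decreasing tuples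
n_1 > ⋯ > n_l > 0 of the coefficient of q^m in
Q_1(q^{n_1})⋯Q_l(q^{n_l}) / ((1−q^{n_1})^{s_1}⋯(1−q^{n_l})^{s_l}). -/
noncomputable def zetaQ (l : ℕ) (s : Fin l → ℕ) (Q : Fin l → Polynomial ℚ) : PowerSeries ℚ :=
  PowerSeries.mk fun m =>
    ∑' n : {n : Fin l → ℕ // StrictAnti n ∧ ∀ i, 0 < n i},
      PowerSeries.coeff (R := ℚ) m
        (∏ j, Polynomial.aeval (PowerSeries.X ^ (n.1 j)) (Q j) *
          ((1 - PowerSeries.X ^ (n.1 j))⁻¹) ^ (s j))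

/-- The bi-bracket [s_1,…,s_l ; r_1,…,r_l] ∈ ℚ[[q]]: the coefficient of q^m is the
sum over tuples u_1 > ⋯ > u_l > 0 and v_1,…,v_l > 0 with u_1v_1+⋯+u_lv_l = m of
Π_j (u_j^{r_j}/r_j!)·(v_j^{s_j−1}/(s_j−1)!). -/
noncomputable def biBracket (l : ℕ) (s r : Fin l → ℕ) : PowerSeries ℚ :=
  PowerSeries.mk fun m =>
    ∑' uv : {p : (Fin l → ℕ) × (Fin l → ℕ) //
        StrictAnti p.1 ∧ (∀ i, 0 < p.1 i) ∧ (∀ i, 0 < p.2 i)},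
      if (∑ j, uv.1.1 j * uv.1.2 j) = m then
        ∏ j, ((uv.1.1 j : ℚ) ^ r j / (r j).factorial) *
             ((uv.1.2 j : ℚ) ^ (s j - 1) / (s j - 1).factorial)
      else 0

/-- Z_q°[1]: the ℚ-span of the ζ_q(s_1,…,s_l;Q_1,…,Q_l) with l ≥ 0, all s_j ≥ 1,
deg Q_j ≤ s_j − 1 (i.e. Q_j = 0 or natDegree Q_j + 1 ≤ s_j) and all Q_j ∈ tℚ[t]. -/
noncomputable def Zqc1 : Submodule ℚ (PowerSeries ℚ) :=
  Submodule.span ℚ {f | ∃ (l : ℕ) (s : Fin l → ℕ) (Q : Fin l → Polynomial ℚ),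
    (∀ j, 1 ≤ s j) ∧ (∀ j, Q j = 0 ∨ (Q j).natDegree + 1 ≤ s j) ∧
    (∀ j, (Q j).coeff 0 = 0) ∧ f = zetaQ l s Q}


open Finset Polynomial

namespace ZqAux

noncomputable def dilFun (n : ℕ) (F : PowerSeries ℚ) : PowerSeries ℚ :=
  PowerSeries.mk fun k => if n ∣ k then PowerSeries.coeff (R := ℚ) (k / n) F else 0

lemma coeff_dilFun (n k : ℕ) (F : PowerSeries ℚ) :
    PowerSeries.coeff (R := ℚ) k (dilFun n F) = if n ∣ k then PowerSeries.coeff (R := ℚ) (k / n) F else 0 := by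
  simp [dilFun]

lemma dilFun_mul (n : ℕ) (hn : 0 < n) (F G : PowerSeries ℚ) :
    dilFun n (F * G) = dilFun n F * dilFun n G := by
  classical
  ext k
  symm
  have hterm : ∀ p : ℕ × ℕ, (PowerSeries.coeff (R := ℚ) p.1 (dilFun n F)) * (PowerSeries.coeff (R := ℚ) p.2 (dilFun n G))
      = if n ∣ p.1 ∧ n ∣ p.2 then PowerSeries.coeff (R := ℚ) (p.1 / n) F * PowerSeries.coeff (R := ℚ) (p.2 / n) G else 0 := by
    rintro ⟨i, j⟩
    rw [coeff_dilFun, coeff_dilFun]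
    by_cases h1 : n ∣ i <;> by_cases h2 : n ∣ j <;> simp [h1, h2]
  rw [PowerSeries.coeff_mul, Finset.sum_congr rfl (fun p _ => hterm p), coeff_dilFun,
    Finset.sum_ite, Finset.sum_const_zero, add_zero]
  by_cases hk : n ∣ k
  · obtain ⟨c, rfl⟩ := hk
    rw [if_pos ⟨c, rfl⟩, Nat.mul_div_cancel_left c hn, PowerSeries.coeff_mul]
    apply Finset.sum_nbij' (i := fun p => (p.1 / n, p.2 / n)) (j := fun q => (n * q.1, n * q.2))
    · rintro ⟨i, j⟩ hij
      simp only [Finset.mem_filter, Finset.HasAntidiagonal.mem_antidiagonal] at hij ⊢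
      obtain ⟨hsum, ⟨a, rfl⟩, ⟨b, rfl⟩⟩ := hij
      rw [Nat.mul_div_cancel_left a hn, Nat.mul_div_cancel_left b hn]
      have : n * (a + b) = n * c := by rw [Nat.mul_add]; exact hsum
      exact Nat.eq_of_mul_eq_mul_left hn this
    · rintro ⟨a, b⟩ hab
      simp only [Finset.HasAntidiagonal.mem_antidiagonal] at hab
      simp only [Finset.mem_filter, Finset.HasAntidiagonal.mem_antidiagonal]
      refine ⟨by rw [← Nat.mul_add, hab], ⟨a, rfl⟩, ⟨b, rfl⟩⟩
    · rintro ⟨i, j⟩ hij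
      simp only [Finset.mem_filter] at hij
      obtain ⟨-, ⟨a, rfl⟩, ⟨b, rfl⟩⟩ := hij
      simp [Nat.mul_div_cancel_left _ hn]
    · rintro ⟨a, b⟩ _
      simp [Nat.mul_div_cancel_left _ hn]
    · rintro ⟨i, j⟩ _
      rfl
  · rw [if_neg hk]
    rw [Finset.sum_eq_zero]
    rintro ⟨i, j⟩ hij
    simp only [Finset.mem_filter, Finset.HasAntidiagonal.mem_antidiagonal] at hij
    exact absurd (hij.1 ▸ Nat.dvd_add hij.2.1 hij.2.2) hk

lemma dilFun_one (n : ℕ) (hn : 0 < n) : dilFun n 1 = 1 := by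
  ext k
  rw [coeff_dilFun]
  by_cases hk : n ∣ k
  · rcases hk with ⟨c, rfl⟩
    rw [if_pos ⟨c, rfl⟩, Nat.mul_div_cancel_left c hn]
    simp only [PowerSeries.coeff_one]
    have : n * c = 0 ↔ c = 0 := by
      constructor
      · intro h; exact (Nat.mul_eq_zero.1 h).resolve_left hn.ne'
      · rintro rfl; simp
    by_cases hc : c = 0 <;> simp [hc, this]
  · rw [if_neg hk, PowerSeries.coeff_one, if_neg]
    rintro rfl
    exact hk (dvd_zero n)

noncomputable def dil (n : ℕ) (hn : 0 < n) : PowerSeries ℚ →ₐ[ℚ] PowerSeries ℚ where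
  toFun := dilFun n
  map_one' := dilFun_one n hn
  map_mul' := dilFun_mul n hn
  map_zero' := by ext k; simp [coeff_dilFun]
  map_add' F G := by
    ext k
    by_cases h : n ∣ k <;> simp [coeff_dilFun, h]
  commutes' r := by
    have : (algebraMap ℚ (PowerSeries ℚ)) r = PowerSeries.C (R := ℚ) r := rfl
    rw [this]
    ext k
    rw [coeff_dilFun]
    by_cases hk : n ∣ k
    · rcases hk with ⟨c, rfl⟩
      rw [if_pos ⟨c, rfl⟩, Nat.mul_div_cancel_left c hn]
      simp only [PowerSeries.coeff_C]
      have : n * c = 0 ↔ c = 0 := by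
        constructor
        · intro h; exact (Nat.mul_eq_zero.1 h).resolve_left hn.ne'
        · rintro rfl; simp
      by_cases hc : c = 0 <;> simp [hc, this]
    · rw [if_neg hk, PowerSeries.coeff_C, if_neg]
      rintro rfl
      exact hk (dvd_zero n)

lemma dil_apply (n : ℕ) (hn : 0 < n) (F : PowerSeries ℚ) : dil n hn F = dilFun n F := rfl

lemma dil_X (n : ℕ) (hn : 0 < n) : dil n hn PowerSeries.X = PowerSeries.X ^ n := by
  ext k
  rw [dil_apply, coeff_dilFun, PowerSeries.coeff_X_pow]
  by_cases hk : n ∣ k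
  · rcases hk with ⟨c, rfl⟩
    rw [if_pos ⟨c, rfl⟩, Nat.mul_div_cancel_left c hn, PowerSeries.coeff_X]
    by_cases hc : c = 1
    · subst hc; simp
    · rw [if_neg hc, if_neg]
      intro h
      exact hc (Nat.eq_of_mul_eq_mul_left hn (by rw [h, Nat.mul_one]))
  · rw [if_neg hk, if_neg]
    intro h
    subst h
    exact hk dvd_rfl


lemma one_sub_X_inv : ((1 - PowerSeries.X : PowerSeries ℚ))⁻¹ = PowerSeries.mk 1 := by
  symm
  rw [PowerSeries.eq_inv_iff_mul_eq_one (by simp)]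
  exact PowerSeries.mk_one_mul_one_sub_eq_one ℚ

lemma coeff_inv_pow (d v : ℕ) :
    PowerSeries.coeff (R := ℚ) v (((1 - PowerSeries.X : PowerSeries ℚ))⁻¹ ^ (d + 1)) = ((d + v).choose d : ℚ) := by
  have h : ((1 - PowerSeries.X : PowerSeries ℚ))⁻¹ ^ (d + 1) = (PowerSeries.invOneSubPow ℚ (d + 1)).val := by
    rw [PowerSeries.invOneSubPow_eq_inv_one_sub_pow, one_sub_X_inv, Units.val_pow_eq_pow_val]
    rfl
  rw [h, PowerSeries.invOneSubPow_val_succ_eq_mk_add_choose]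
  simp

noncomputable def gP (d k : ℕ) : Polynomial ℚ :=
  Polynomial.C ((d.factorial : ℚ)⁻¹) *
    ∏ i ∈ Finset.range d, (Polynomial.X + Polynomial.C ((i : ℚ) + 1 - (k : ℚ)))

lemma gP_eval (d k : ℕ) (x : ℚ) :
    (gP d k).eval x = (d.factorial : ℚ)⁻¹ * ∏ i ∈ Finset.range d, (x + ((i : ℚ) + 1 - (k : ℚ))) := by
  simp [gP, eval_prod]

lemma prod_asc (d w : ℕ) :
    (∏ i ∈ Finset.range d, ((w : ℚ) + (i : ℚ) + 1)) = (d.factorial : ℚ) * ((w + d).choose d : ℚ) := by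
  induction d with
  | zero => simp
  | succ d ih =>
    rw [Finset.prod_range_succ, ih]
    have hnat : (w + d + 1) * (w + d).choose d = (w + d + 1).choose (d + 1) * (d + 1) := by
      have := Nat.add_one_mul_choose_eq (w + d) d
      simpa [Nat.succ_eq_add_one] using this
    have hq : ((w : ℚ) + d + 1) * ((w + d).choose d : ℚ) = ((w + d + 1).choose (d + 1) : ℚ) * (d + 1) := by
      exact_mod_cast congrArg (fun t : ℕ => (t : ℚ)) hnat
    have : (w + (d + 1) : ℕ) = (w + d + 1 : ℕ) := by omega
    rw [Nat.factorial_succ, this]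
    push_cast
    nlinarith [hq]

lemma gP_eval_of_le (d k v : ℕ) (h : k ≤ v) :
    (gP d k).eval (v : ℚ) = ((v - k + d).choose d : ℚ) := by
  rw [gP_eval]
  have hw : ∀ i ∈ Finset.range d, ((v : ℚ) + ((i : ℚ) + 1 - (k : ℚ))) = (((v - k : ℕ) : ℚ) + (i : ℚ) + 1) := by
    intro i _
    have : ((v - k : ℕ) : ℚ) = (v : ℚ) - (k : ℚ) := by
      push_cast [Nat.cast_sub h]; ring
    rw [this]; ring
  rw [Finset.prod_congr rfl hw, prod_asc]
  rw [← mul_assoc, inv_mul_cancel₀ (by exact_mod_cast d.factorial_ne_zero), one_mul]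

lemma gP_eval_zero_of (d k : ℕ) (hk : 1 ≤ k) (hkd : k ≤ d) : (gP d k).eval 0 = 0 := by
  rw [gP_eval]
  rw [Finset.prod_eq_zero (Finset.mem_range.2 (show k - 1 < d by omega))]
  · ring
  · have : ((k - 1 : ℕ) : ℚ) = (k : ℚ) - 1 := by push_cast [Nat.cast_sub hk]; ring
    rw [this]; ring

lemma gP_eval_of_lt (d k v : ℕ) (hv : 1 ≤ v) (hvk : v < k) (hkd : k ≤ d) :
    (gP d k).eval (v : ℚ) = 0 := by
  rw [gP_eval]
  rw [Finset.prod_eq_zero (Finset.mem_range.2 (show k - v - 1 < d by omega))]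
  · ring
  · have hn : (k - v - 1 : ℕ) + (v + 1) = k := by omega
    have hq : ((k - v - 1 : ℕ) : ℚ) = (k : ℚ) - (v : ℚ) - 1 := by
      have := congrArg (Nat.cast : ℕ → ℚ) hn
      push_cast at this
      linarith
    rw [hq]; ring


end ZqAux
section Stage3
open Finset Polynomial
namespace ZqAux

lemma dil_one_sub_X_inv (n : ℕ) (hn : 0 < n) :
    dil n hn ((1 - PowerSeries.X : PowerSeries ℚ))⁻¹ = (1 - PowerSeries.X ^ n)⁻¹ := by
  have hc : PowerSeries.constantCoeff (R := ℚ) (1 - PowerSeries.X ^ n) ≠ 0 := by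
    simp [zero_pow hn.ne']
  rw [PowerSeries.eq_inv_iff_mul_eq_one hc]
  have h1 : (1 - PowerSeries.X : PowerSeries ℚ) * (1 - PowerSeries.X)⁻¹ = 1 :=
    PowerSeries.mul_inv_cancel _ (by simp)
  have h2 := congrArg (dil n hn) h1
  rw [map_mul, map_one, map_sub, map_one, dil_X] at h2
  rw [mul_comm]
  exact h2

lemma dil_coe (n : ℕ) (hn : 0 < n) (Q : Polynomial ℚ) :
    dil n hn (Q : PowerSeries ℚ) = Polynomial.aeval ((PowerSeries.X : PowerSeries ℚ) ^ n) Q := by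
  have h : (dil n hn).comp (Polynomial.coeToPowerSeries.algHom ℚ)
      = Polynomial.aeval ((PowerSeries.X : PowerSeries ℚ) ^ n) := by
    apply Polynomial.algHom_ext
    simp [dil_X]
  have := congrFun (congrArg DFunLike.coe h) Q
  simpa using this

lemma dil_term (n : ℕ) (hn : 0 < n) (Q : Polynomial ℚ) (s : ℕ) :
    Polynomial.aeval ((PowerSeries.X : PowerSeries ℚ) ^ n) Q * ((1 - PowerSeries.X ^ n)⁻¹) ^ s
      = dilFun n ((Q : PowerSeries ℚ) * ((1 - PowerSeries.X)⁻¹) ^ s) := by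
  have : dilFun n ((Q : PowerSeries ℚ) * ((1 - PowerSeries.X)⁻¹) ^ s)
      = dil n hn ((Q : PowerSeries ℚ) * ((1 - PowerSeries.X)⁻¹) ^ s) := rfl
  rw [this, map_mul, map_pow, dil_coe, dil_one_sub_X_inv]

noncomputable def pQ (d : ℕ) (Q : Polynomial ℚ) : Polynomial ℚ :=
  ∑ k ∈ Q.support, Polynomial.C (Q.coeff k) * gP d k

lemma pQ_eval_zero (d : ℕ) (Q : Polynomial ℚ) (h0 : Q.coeff 0 = 0)
    (hdeg : Q = 0 ∨ Q.natDegree ≤ d) : (pQ d Q).eval 0 = 0 := by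
  rcases hdeg with rfl | hdeg
  · simp [pQ]
  rw [pQ, Polynomial.eval_finset_sum]
  apply Finset.sum_eq_zero
  intro k hk
  have hk1 : 1 ≤ k := by
    rcases Nat.eq_zero_or_pos k with rfl | h
    · exact absurd h0 (Polynomial.mem_support_iff.1 hk)
    · exact h
  have hkd : k ≤ d := le_trans (Polynomial.le_natDegree_of_mem_supp k hk) hdeg
  rw [Polynomial.eval_mul, gP_eval_zero_of d k hk1 hkd, mul_zero]

lemma coeff_G_zero (d : ℕ) (Q : Polynomial ℚ) (h0 : Q.coeff 0 = 0) :
    PowerSeries.coeff (R := ℚ) 0 ((Q : PowerSeries ℚ) * ((1 - PowerSeries.X)⁻¹) ^ (d + 1)) = 0 := by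
  rw [PowerSeries.coeff_mul]
  simp [Polynomial.coeff_coe, h0]

lemma coeff_G_eq (d : ℕ) (Q : Polynomial ℚ) (h0 : Q.coeff 0 = 0)
    (hdeg : Q = 0 ∨ Q.natDegree ≤ d) (v : ℕ) (hv : 1 ≤ v) :
    PowerSeries.coeff (R := ℚ) v ((Q : PowerSeries ℚ) * ((1 - PowerSeries.X)⁻¹) ^ (d + 1))
      = (pQ d Q).eval (v : ℚ) := by
  classical
  rcases hdeg with rfl | hdeg
  · simp [pQ]
  rw [PowerSeries.coeff_mul, Finset.Nat.sum_antidiagonal_eq_sum_range_succ_mk]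
  have hterm : ∀ i ∈ Finset.range (v + 1),
      PowerSeries.coeff (R := ℚ) i (Q : PowerSeries ℚ) * PowerSeries.coeff (R := ℚ) (v - i) (((1 - PowerSeries.X)⁻¹) ^ (d + 1))
        = Q.coeff i * ((d + (v - i)).choose d : ℚ) := by
    intro i _
    rw [Polynomial.coeff_coe, coeff_inv_pow]
  rw [Finset.sum_congr rfl hterm]
  -- reduce LHS to sum over support.filter (· ≤ v)
  have hLHS : ∑ i ∈ Finset.range (v + 1), Q.coeff i * ((d + (v - i)).choose d : ℚ)
      = ∑ i ∈ Q.support.filter (· ≤ v), Q.coeff i * ((d + (v - i)).choose d : ℚ) := by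
    rw [← Finset.sum_filter_of_ne (p := fun i => i ∈ Q.support)
      (fun x _ hx => Polynomial.mem_support_iff.2 (fun hc => hx (by rw [hc, zero_mul])))]
    apply Finset.sum_congr
    · ext i
      simp only [Finset.mem_filter, Finset.mem_range, Nat.lt_succ_iff]
      tauto
    · intros; rfl
  rw [hLHS]
  -- RHS
  rw [pQ, Polynomial.eval_finset_sum]
  have hRHS : ∀ k ∈ Q.support,
      (Polynomial.C (Q.coeff k) * gP d k).eval (v : ℚ)
        = if k ≤ v then Q.coeff k * (((v - k) + d).choose d : ℚ) else 0 := by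
    intro k hk
    have hk1 : 1 ≤ k := by
      rcases Nat.eq_zero_or_pos k with rfl | h
      · exact absurd h0 (Polynomial.mem_support_iff.1 hk)
      · exact h
    have hkd : k ≤ d := le_trans (Polynomial.le_natDegree_of_mem_supp k hk) hdeg
    rw [Polynomial.eval_mul, Polynomial.eval_C]
    by_cases hkv : k ≤ v
    · rw [if_pos hkv, gP_eval_of_le d k v hkv]
    · rw [if_neg hkv, gP_eval_of_lt d k v hv (by omega) hkd, mul_zero]
  rw [Finset.sum_congr rfl hRHS, Finset.sum_ite, Finset.sum_const_zero, add_zero]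
  apply Finset.sum_congr rfl
  intro k hk
  have : d + (v - k) = (v - k) + d := by omega
  rw [this]

end ZqAux
end Stage3
section Stage4
open Finset Polynomial
namespace ZqAux

noncomputable def goodN (l m : ℕ) : Finset (Fin l → ℕ) :=
  Fintype.piFinset fun _ => Finset.range (m + 1)

open Classical in
noncomputable def Ucoeff (l m : ℕ) (p : Fin l → Polynomial ℚ) : ℚ :=
  ∑ n ∈ goodN l m, ∑ v ∈ goodN l m,
    if StrictAnti n ∧ (∀ i, 0 < n i) ∧ (∀ i, 0 < v i) ∧ (∑ j, n j * v j) = m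
    then ∏ j, (p j).eval ((v j : ℚ)) else 0

lemma prod_eval_update (l : ℕ) (p : Fin l → Polynomial ℚ) (i : Fin l) (x : Polynomial ℚ)
    (v : Fin l → ℕ) :
    (∏ j, (Function.update p i x j).eval ((v j : ℚ)))
      = x.eval ((v i : ℚ)) * ∏ j ∈ Finset.univ \ {i}, (p j).eval ((v j : ℚ)) := by
  classical
  have hcongr : ∀ j ∈ Finset.univ, (Function.update p i x j).eval ((v j : ℚ))
      = Function.update (fun j => (p j).eval ((v j : ℚ))) i (x.eval ((v i : ℚ))) j := by
    intro j _
    rcases eq_or_ne j i with rfl | hj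
    · simp
    · simp [Function.update_of_ne hj]
  rw [Finset.prod_congr rfl hcongr, Finset.prod_update_of_mem (Finset.mem_univ i)]

noncomputable def Umap (l : ℕ) :
    MultilinearMap ℚ (fun _ : Fin l => Polynomial ℚ) (PowerSeries ℚ) where
  toFun p := PowerSeries.mk fun m => Ucoeff l m p
  map_update_add' := by
    intro inst p i x y
    have hinst : inst = instDecidableEqFin l := Subsingleton.elim _ _
    subst hinst
    apply PowerSeries.ext
    intro m
    simp only [PowerSeries.coeff_mk, map_add]
    rw [Ucoeff, Ucoeff, Ucoeff, ← Finset.sum_add_distrib]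
    apply Finset.sum_congr rfl
    intro n _
    rw [← Finset.sum_add_distrib]
    apply Finset.sum_congr rfl
    intro v _
    by_cases hc : StrictAnti n ∧ (∀ i, 0 < n i) ∧ (∀ i, 0 < v i) ∧ (∑ j, n j * v j) = m
    · rw [if_pos hc, if_pos hc, if_pos hc, prod_eval_update, prod_eval_update, prod_eval_update,
        Polynomial.eval_add]
      ring
    · rw [if_neg hc, if_neg hc, if_neg hc, add_zero]
  map_update_smul' := by
    intro inst p i c x
    have hinst : inst = instDecidableEqFin l := Subsingleton.elim _ _
    subst hinst
    apply PowerSeries.ext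
    intro m
    simp only [PowerSeries.coeff_mk, LinearMap.map_smul, smul_eq_mul]
    rw [Ucoeff, Ucoeff, Finset.mul_sum]
    apply Finset.sum_congr rfl
    intro n _
    rw [Finset.mul_sum]
    apply Finset.sum_congr rfl
    intro v _
    by_cases hc : StrictAnti n ∧ (∀ i, 0 < n i) ∧ (∀ i, 0 < v i) ∧ (∑ j, n j * v j) = m
    · rw [if_pos hc, if_pos hc, prod_eval_update, prod_eval_update, Polynomial.eval_smul,
        smul_eq_mul]
      ring
    · rw [if_neg hc, if_neg hc, mul_zero]

lemma coeff_Umap (l m : ℕ) (p : Fin l → Polynomial ℚ) :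
    PowerSeries.coeff (R := ℚ) m (Umap l p) = Ucoeff l m p := by
  simp [Umap, PowerSeries.coeff_mk]

lemma coeff_prod_dil (l m : ℕ) (n : Fin l → ℕ) (hn : ∀ j, 0 < n j) (G : Fin l → PowerSeries ℚ) :
    PowerSeries.coeff (R := ℚ) m (∏ j, dilFun (n j) (G j)) =
      ∑ v ∈ goodN l m, (if (∑ j, n j * v j) = m
        then ∏ j, PowerSeries.coeff (R := ℚ) (v j) (G j) else 0) := by
  classical
  rw [PowerSeries.coeff_prod]
  have hterm : ∀ e : Fin l →₀ ℕ,
      (∏ j, PowerSeries.coeff (R := ℚ) (e j) (dilFun (n j) (G j)))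
        = if (∀ j, n j ∣ e j) then ∏ j, PowerSeries.coeff (R := ℚ) (e j / n j) (G j) else 0 := by
    intro e
    by_cases h : ∀ j, n j ∣ e j
    · rw [if_pos h]
      exact Finset.prod_congr rfl fun j _ => by rw [coeff_dilFun, if_pos (h j)]
    · rw [if_neg h]
      push_neg at h
      obtain ⟨j0, hj0⟩ := h
      exact Finset.prod_eq_zero (Finset.mem_univ j0) (by rw [coeff_dilFun, if_neg hj0])
  rw [Finset.sum_congr rfl (fun e _ => hterm e), Finset.sum_ite, Finset.sum_const_zero, add_zero,
    ← Finset.sum_filter]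
  apply Finset.sum_nbij' (i := fun e : Fin l →₀ ℕ => (fun j => e j / n j))
    (j := fun v : Fin l → ℕ => Finsupp.equivFunOnFinite.symm (fun j => n j * v j))
  · intro e he
    simp only [Finset.mem_filter] at he ⊢
    obtain ⟨hmem, hdvd⟩ := he
    rw [Finset.mem_finsuppAntidiag] at hmem
    obtain ⟨hsum, -⟩ := hmem
    constructor
    · rw [goodN, Fintype.mem_piFinset]
      intro j
      rw [Finset.mem_range]
      have h1 : e j ≤ m := hsum ▸ Finset.single_le_sum (fun i _ => Nat.zero_le _) (Finset.mem_univ j)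
      have := Nat.div_le_self (e j) (n j)
      omega
    · rw [← hsum]
      exact Finset.sum_congr rfl fun j _ => Nat.mul_div_cancel' (hdvd j)
  · intro v hv
    simp only [Finset.mem_filter] at hv ⊢
    obtain ⟨-, hsum⟩ := hv
    constructor
    · rw [Finset.mem_finsuppAntidiag]
      constructor
      · rw [← hsum]
        apply Finset.sum_congr rfl
        intro j _
        simp
      · exact Finset.subset_univ _
    · intro j
      simp only [Finsupp.coe_equivFunOnFinite_symm]
      exact Dvd.intro _ rfl
  · intro e he
    simp only [Finset.mem_filter] at he
    have : (fun j => n j * (e j / n j)) = ⇑e := by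
      funext j
      exact Nat.mul_div_cancel' (he.2 j)
    rw [this, Finsupp.equivFunOnFinite_symm_coe]
  · intro v _
    funext j
    simp only [Finsupp.coe_equivFunOnFinite_symm]
    exact Nat.mul_div_cancel_left _ (hn j)
  · intro e _
    rfl

lemma coeff_zeta_term (l m : ℕ) (s : Fin l → ℕ) (Q : Fin l → Polynomial ℚ)
    (hs : ∀ j, 1 ≤ s j) (hdeg : ∀ j, Q j = 0 ∨ (Q j).natDegree + 1 ≤ s j)
    (h0 : ∀ j, (Q j).coeff 0 = 0) (n : Fin l → ℕ) (hn : ∀ j, 0 < n j) :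
    PowerSeries.coeff (R := ℚ) m (∏ j, Polynomial.aeval (PowerSeries.X ^ (n j)) (Q j) *
        ((1 - PowerSeries.X ^ (n j))⁻¹) ^ (s j))
      = ∑ v ∈ goodN l m, (if (∑ j, n j * v j) = m
          then ∏ j, (pQ (s j - 1) (Q j)).eval ((v j : ℚ)) else 0) := by
  classical
  have hfac : ∀ j ∈ Finset.univ, Polynomial.aeval ((PowerSeries.X : PowerSeries ℚ) ^ (n j)) (Q j) *
      ((1 - PowerSeries.X ^ (n j))⁻¹) ^ (s j)
      = dilFun (n j) ((Q j : PowerSeries ℚ) * ((1 - PowerSeries.X)⁻¹) ^ (s j)) :=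
    fun j _ => dil_term (n j) (hn j) (Q j) (s j)
  rw [Finset.prod_congr rfl hfac, coeff_prod_dil l m n hn]
  apply Finset.sum_congr rfl
  intro v _
  by_cases hc : (∑ j, n j * v j) = m
  · rw [if_pos hc, if_pos hc]
    have hdeg' : ∀ j, Q j = 0 ∨ (Q j).natDegree ≤ s j - 1 := by
      intro j
      rcases hdeg j with h | h
      · exact Or.inl h
      · right; omega
    by_cases hv : ∀ i, 0 < v i
    · apply Finset.prod_congr rfl
      intro j _
      have hsj : s j = (s j - 1) + 1 := by have := hs j; omega
      have hco := coeff_G_eq (s j - 1) (Q j) (h0 j) (hdeg' j) (v j) (hv j)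
      rw [← hsj] at hco
      exact hco
    · push_neg at hv
      obtain ⟨i0, hi0⟩ := hv
      have hvi0 : v i0 = 0 := by omega
      have hA : PowerSeries.coeff (R := ℚ) (v i0)
          ((Q i0 : PowerSeries ℚ) * ((1 - PowerSeries.X)⁻¹) ^ (s i0)) = 0 := by
        have hsj : s i0 = (s i0 - 1) + 1 := by have := hs i0; omega
        rw [hvi0, hsj]
        exact coeff_G_zero (s i0 - 1) (Q i0) (h0 i0)
      have hB : (pQ (s i0 - 1) (Q i0)).eval ((v i0 : ℚ)) = 0 := by
        rw [hvi0, Nat.cast_zero]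
        exact pQ_eval_zero _ _ (h0 i0) (hdeg' i0)
      rw [Finset.prod_eq_zero (Finset.mem_univ i0) hA,
        Finset.prod_eq_zero (Finset.mem_univ i0) hB]
  · rw [if_neg hc, if_neg hc]

end ZqAux
end Stage4
section Stage5
open Finset Polynomial
namespace ZqAux

lemma Ucoeff_eq_filtered (l m : ℕ) (p : Fin l → Polynomial ℚ)
    (hp0 : ∀ j, (p j).eval 0 = 0) :
    Ucoeff l m p = ∑ n ∈ (goodN l m).filter (fun n => StrictAnti n ∧ ∀ i, 0 < n i),
      ∑ v ∈ goodN l m, (if (∑ j, n j * v j) = m then ∏ j, (p j).eval ((v j : ℚ)) else 0) := by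
  classical
  rw [Ucoeff]
  conv_rhs => rw [Finset.sum_filter]
  apply Finset.sum_congr rfl
  intro n _
  by_cases hPn : StrictAnti n ∧ ∀ i, 0 < n i
  · rw [if_pos hPn]
    apply Finset.sum_congr rfl
    intro v _
    by_cases hc : (∑ j, n j * v j) = m
    · by_cases hv : ∀ i, 0 < v i
      · rw [if_pos ⟨hPn.1, hPn.2, hv, hc⟩, if_pos hc]
      · rw [if_neg (by tauto), if_pos hc]
        push_neg at hv
        obtain ⟨i0, hi0⟩ := hv
        symm
        apply Finset.prod_eq_zero (Finset.mem_univ i0)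
        have hvi : v i0 = 0 := by omega
        rw [hvi, Nat.cast_zero]
        exact hp0 i0
    · rw [if_neg (by tauto), if_neg hc]
  · rw [if_neg hPn]
    apply Finset.sum_eq_zero
    intro v _
    rw [if_neg (by tauto)]

lemma zetaQ_eq_U (l : ℕ) (s : Fin l → ℕ) (Q : Fin l → Polynomial ℚ)
    (hs : ∀ j, 1 ≤ s j) (hdeg : ∀ j, Q j = 0 ∨ (Q j).natDegree + 1 ≤ s j)
    (h0 : ∀ j, (Q j).coeff 0 = 0) :
    zetaQ l s Q = Umap l (fun j => pQ (s j - 1) (Q j)) := by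
  classical
  have hdeg' : ∀ j, Q j = 0 ∨ (Q j).natDegree ≤ s j - 1 := by
    intro j
    rcases hdeg j with h | h
    · exact Or.inl h
    · right; omega
  have hp0 : ∀ j, (pQ (s j - 1) (Q j)).eval 0 = 0 :=
    fun j => pQ_eval_zero _ _ (h0 j) (hdeg' j)
  apply PowerSeries.ext
  intro m
  rw [coeff_Umap, zetaQ, PowerSeries.coeff_mk]
  rw [tsum_eq_sum (s := (goodN l m).subtype (fun n => StrictAnti n ∧ ∀ i, 0 < n i)) ?hout]
  case hout =>
    intro b hb
    rw [coeff_zeta_term l m s Q hs hdeg h0 b.1 b.2.2]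
    apply Finset.sum_eq_zero
    intro v _
    by_cases hc : (∑ j, b.1 j * v j) = m
    · rw [if_pos hc]
      have hbig : ∃ j, m < b.1 j := by
        by_contra hall
        push_neg at hall
        apply hb
        rw [Finset.mem_subtype]
        refine Finset.mem_coe.1 ?_
        rw [Finset.mem_coe, goodN, Fintype.mem_piFinset]
        exact fun j => Finset.mem_range.2 (by have := hall j; omega)
      obtain ⟨j0, hj0⟩ := hbig
      have hv0 : v j0 = 0 := by
        by_contra hne
        have h1 : 1 ≤ v j0 := Nat.pos_of_ne_zero hne
        have h2 : b.1 j0 * v j0 ≤ m :=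
          hc ▸ Finset.single_le_sum (f := fun i => b.1 i * v i)
            (fun i _ => Nat.zero_le _) (Finset.mem_univ j0)
        nlinarith
      apply Finset.prod_eq_zero (Finset.mem_univ j0)
      rw [hv0, Nat.cast_zero]
      exact hp0 j0
    · rw [if_neg hc]
  refine (Finset.sum_subtype_eq_sum_filter
    (fun n : Fin l → ℕ => PowerSeries.coeff (R := ℚ) m (∏ j, Polynomial.aeval (PowerSeries.X ^ (n j)) (Q j) *
      ((1 - PowerSeries.X ^ (n j))⁻¹) ^ (s j)))
    (p := fun n : Fin l → ℕ => StrictAnti n ∧ ∀ i, 0 < n i)).trans ?_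
  rw [Ucoeff_eq_filtered l m _ hp0]
  symm
  apply Finset.sum_congr rfl
  intro n hnmem
  rw [Finset.mem_filter] at hnmem
  exact (coeff_zeta_term l m s Q hs hdeg h0 n hnmem.2.2).symm

noncomputable def pB (s : ℕ) : Polynomial ℚ :=
  Polynomial.C (((s - 1).factorial : ℚ)⁻¹) * Polynomial.X ^ (s - 1)

lemma biBracket_eq_U (l : ℕ) (s : Fin l → ℕ) :
    biBracket l s (fun _ => 0) = Umap l (fun j => pB (s j)) := by
  classical
  apply PowerSeries.ext
  intro m
  rw [coeff_Umap, biBracket, PowerSeries.coeff_mk]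
  rw [tsum_eq_sum (s := ((goodN l m) ×ˢ (goodN l m)).subtype
    (fun p : (Fin l → ℕ) × (Fin l → ℕ) => StrictAnti p.1 ∧ (∀ i, 0 < p.1 i) ∧ (∀ i, 0 < p.2 i)))
    ?hout]
  case hout =>
    intro b hb
    rw [if_neg]
    intro hc
    apply hb
    rw [Finset.mem_subtype, Finset.mem_product]
    have hbound : ∀ j, b.1.1 j * b.1.2 j ≤ m :=
      fun j => hc ▸ Finset.single_le_sum (f := fun i => b.1.1 i * b.1.2 i)
        (fun i _ => Nat.zero_le _) (Finset.mem_univ j)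
    constructor
    · rw [goodN, Fintype.mem_piFinset]
      intro j
      rw [Finset.mem_range]
      have h1 : 1 ≤ b.1.2 j := b.2.2.2 j
      have h2 := hbound j
      nlinarith
    · rw [goodN, Fintype.mem_piFinset]
      intro j
      rw [Finset.mem_range]
      have h1 : 1 ≤ b.1.1 j := b.2.2.1 j
      have h2 := hbound j
      nlinarith
  refine (Finset.sum_subtype_eq_sum_filter
    (fun q : (Fin l → ℕ) × (Fin l → ℕ) =>
      if (∑ j, q.1 j * q.2 j) = m then
        ∏ j, ((q.1 j : ℚ) ^ (0:ℕ) / (Nat.factorial 0) : ℚ) *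
             ((q.2 j : ℚ) ^ (s j - 1) / (s j - 1).factorial)
      else 0)
    (p := fun q : (Fin l → ℕ) × (Fin l → ℕ) =>
      StrictAnti q.1 ∧ (∀ i, 0 < q.1 i) ∧ (∀ i, 0 < q.2 i))).trans ?_
  rw [Ucoeff, ← Finset.sum_product', Finset.sum_filter]
  apply Finset.sum_congr rfl
  intro q _
  by_cases hP : StrictAnti q.1 ∧ (∀ i, 0 < q.1 i) ∧ (∀ i, 0 < q.2 i)
  · rw [if_pos hP]
    by_cases hc : (∑ j, q.1 j * q.2 j) = m
    · rw [if_pos hc, if_pos ⟨hP.1, hP.2.1, hP.2.2, hc⟩]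
      apply Finset.prod_congr rfl
      intro j _
      simp only [pB, pow_zero, Nat.factorial_zero, Nat.cast_one, Polynomial.eval_mul,
        Polynomial.eval_C, Polynomial.eval_pow, Polynomial.eval_X]
      rw [div_eq_mul_inv, div_eq_mul_inv]
      ring
    · rw [if_neg hc, if_neg (by tauto)]
  · rw [if_neg hP, if_neg (by tauto)]

end ZqAux
end Stage5
section Stage6
open Finset Polynomial
namespace ZqAux

def FB : Set (Polynomial ℚ) := {p | ∃ s : ℕ, 2 ≤ s ∧ p = pB s}
def FBZ : Set (Polynomial ℚ) := {p | ∃ d : ℕ, 1 ≤ d ∧ p = gP d d}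

lemma gP_M_monic (d : ℕ) :
    (∏ i ∈ Finset.range d, (Polynomial.X + Polynomial.C ((i : ℚ) + 1 - (d : ℚ)))).Monic :=
  Polynomial.monic_prod_of_monic _ _ (fun i _ => Polynomial.monic_X_add_C _)

lemma gP_M_natDegree (d : ℕ) :
    (∏ i ∈ Finset.range d, (Polynomial.X + Polynomial.C ((i : ℚ) + 1 - (d : ℚ)))).natDegree = d := by
  rw [Polynomial.natDegree_prod _ _ (fun i _ => (Polynomial.monic_X_add_C _).ne_zero)]
  have : ∀ i ∈ Finset.range d, (Polynomial.X + Polynomial.C ((i : ℚ) + 1 - (d : ℚ))).natDegree = 1 :=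
    fun i _ => Polynomial.natDegree_X_add_C _
  rw [Finset.sum_congr rfl this, Finset.sum_const, Finset.card_range, smul_eq_mul, mul_one]

lemma gP_natDegree_eq (d : ℕ) : (gP d d).natDegree = d := by
  rw [gP, Polynomial.natDegree_C_mul (by
    exact inv_ne_zero (by exact_mod_cast d.factorial_ne_zero)), gP_M_natDegree]

lemma gP_coeff_self (d : ℕ) : (gP d d).coeff d = (d.factorial : ℚ)⁻¹ := by
  rw [gP, Polynomial.coeff_C_mul]
  have h1 : (∏ i ∈ Finset.range d, (Polynomial.X + Polynomial.C ((i : ℚ) + 1 - (d : ℚ)))).coeff d = 1 := by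
    have := (gP_M_monic d).coeff_natDegree
    rwa [gP_M_natDegree] at this
  rw [h1, mul_one]

lemma gP_coeff_zero (d : ℕ) (hd : 1 ≤ d) : (gP d d).coeff 0 = 0 := by
  rw [Polynomial.coeff_zero_eq_eval_zero]
  exact gP_eval_zero_of d d hd le_rfl

lemma span_FBZ : ∀ N, ∀ p : Polynomial ℚ, p.natDegree ≤ N → p.coeff 0 = 0 →
    p ∈ Submodule.span ℚ FBZ := by
  intro N
  induction N with
  | zero =>
    intro p hd h0
    have : p = Polynomial.C (p.coeff 0) := Polynomial.eq_C_of_natDegree_le_zero hd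
    rw [this, h0, Polynomial.C_0]
    exact Submodule.zero_mem _
  | succ N ih =>
    intro p hd h0
    by_cases hp : p.natDegree ≤ N
    · exact ih p hp h0
    set c : ℚ := p.coeff (N + 1) * ((N + 1).factorial : ℚ) with hc
    have hq0 : (p - c • gP (N + 1) (N + 1)).coeff 0 = 0 := by
      rw [Polynomial.coeff_sub, Polynomial.coeff_smul, gP_coeff_zero (N + 1) (by omega), h0]
      simp
    have hqd : (p - c • gP (N + 1) (N + 1)).natDegree ≤ N := by
      rw [Polynomial.natDegree_le_iff_coeff_eq_zero]
      intro M hM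
      rcases eq_or_lt_of_le (Nat.succ_le_of_lt hM) with hMe | hMl
      · rw [← hMe, Polynomial.coeff_sub, Polynomial.coeff_smul, gP_coeff_self, smul_eq_mul, hc]
        have hne : ((N + 1).factorial : ℚ) ≠ 0 := by exact_mod_cast (N + 1).factorial_ne_zero
        field_simp
        simp
      · rw [Polynomial.coeff_sub, Polynomial.coeff_smul,
          Polynomial.coeff_eq_zero_of_natDegree_lt (lt_of_le_of_lt hd hMl),
          Polynomial.coeff_eq_zero_of_natDegree_lt
            (lt_of_le_of_lt (le_of_eq (gP_natDegree_eq (N + 1))) hMl)]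
        simp
    have hpq : p = (p - c • gP (N + 1) (N + 1)) + c • gP (N + 1) (N + 1) := by ring
    rw [hpq]
    exact Submodule.add_mem _ (ih _ hqd hq0)
      (Submodule.smul_mem _ _ (Submodule.subset_span ⟨N + 1, by omega, rfl⟩))

lemma mem_span_FBZ (p : Polynomial ℚ) (h0 : p.coeff 0 = 0) : p ∈ Submodule.span ℚ FBZ :=
  span_FBZ p.natDegree p le_rfl h0

lemma mem_span_FB (p : Polynomial ℚ) (h0 : p.coeff 0 = 0) : p ∈ Submodule.span ℚ FB := by
  classical
  rw [p.as_sum_support]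
  apply Submodule.sum_mem
  intro k hk
  have hk0 : k ≠ 0 := by
    rintro rfl
    exact (Polynomial.mem_support_iff.1 hk) h0
  have hmono : (Polynomial.monomial k) (p.coeff k)
      = (p.coeff k * (k.factorial : ℚ)) • pB (k + 1) := by
    rw [pB]
    have h1 : k + 1 - 1 = k := by omega
    rw [h1, Polynomial.smul_eq_C_mul, ← mul_assoc, ← Polynomial.C_mul]
    have hne : (k.factorial : ℚ) ≠ 0 := by exact_mod_cast k.factorial_ne_zero
    rw [mul_assoc, mul_inv_cancel₀ hne, mul_one, Polynomial.C_mul_X_pow_eq_monomial]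
  rw [hmono]
  exact Submodule.smul_mem _ _ (Submodule.subset_span ⟨k + 1, by omega, rfl⟩)

lemma pQ_X_pow (d : ℕ) : pQ d (Polynomial.X ^ d : Polynomial ℚ) = gP d d := by
  classical
  rw [pQ, Polynomial.support_X_pow (R := ℚ) d, Finset.sum_singleton]
  rw [Polynomial.coeff_X_pow, if_pos rfl, Polynomial.C_1, one_mul]

lemma multilinear_mem_span (l : ℕ)
    (f : MultilinearMap ℚ (fun _ : Fin l => Polynomial ℚ) (PowerSeries ℚ))
    (F : Set (Polynomial ℚ)) :
    ∀ T : Finset (Fin l), ∀ p : Fin l → Polynomial ℚ,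
      (∀ j, j ∈ T → p j ∈ Submodule.span ℚ F) → (∀ j, j ∉ T → p j ∈ F) →
      f p ∈ Submodule.span ℚ {x | ∃ q : Fin l → Polynomial ℚ, (∀ j, q j ∈ F) ∧ x = f q} := by
  classical
  intro T
  induction T using Finset.induction_on with
  | empty =>
    intro p _ h2
    exact Submodule.subset_span ⟨p, fun j => h2 j (Finset.notMem_empty j), rfl⟩
  | @insert i T hiT ih =>
    intro p h1 h2
    have key : ∀ x, x ∈ Submodule.span ℚ F →
        f (Function.update p i x)
          ∈ Submodule.span ℚ {x | ∃ q : Fin l → Polynomial ℚ, (∀ j, q j ∈ F) ∧ x = f q} := by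
      intro x hx
      induction hx using Submodule.span_induction with
      | mem y hy =>
        apply ih (Function.update p i y)
        · intro j hj
          have hji : j ≠ i := fun h => hiT (h ▸ hj)
          rw [Function.update_of_ne hji]
          exact h1 j (Finset.mem_insert_of_mem hj)
        · intro j hj
          rcases eq_or_ne j i with rfl | hji
          · rw [Function.update_self]
            exact hy
          · rw [Function.update_of_ne hji]
            exact h2 j (by simp [Finset.mem_insert, hji, hj])
      | zero =>
        rw [f.map_update_zero]
        exact Submodule.zero_mem _
      | add y z hy hz ihy ihz =>
        rw [f.map_update_add]
        exact Submodule.add_mem _ ihy ihz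
      | smul c y hy ihy =>
        rw [f.map_update_smul]
        exact Submodule.smul_mem _ _ ihy
    have := key (p i) (h1 i (Finset.mem_insert_self i T))
    rwa [Function.update_eq_self] at this

lemma zgen_mem_span_of (F : Set (Polynomial ℚ)) (K : Submodule ℚ (PowerSeries ℚ))
    (hFK : ∀ (l : ℕ) (q : Fin l → Polynomial ℚ), (∀ j, q j ∈ F) → Umap l q ∈ K)
    (l : ℕ) (p : Fin l → Polynomial ℚ) (hp : ∀ j, p j ∈ Submodule.span ℚ F) :
    Umap l p ∈ K := by
  have h := multilinear_mem_span l (Umap l) F Finset.univ p (fun j _ => hp j)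
    (fun j hj => absurd (Finset.mem_univ j) hj)
  refine Submodule.span_le.2 ?_ h
  rintro x ⟨q, hq, rfl⟩
  exact hFK l q hq

lemma BZ_eq (l : ℕ) (t : Fin l → ℕ) (ht : ∀ j, 1 ≤ t j) :
    zetaQ l (fun j => t j + 1) (fun j => Polynomial.X ^ (t j))
      = Umap l (fun j => gP (t j) (t j)) := by
  rw [zetaQ_eq_U l _ _ (fun j => by omega)
    (fun j => Or.inr (by rw [Polynomial.natDegree_X_pow]))
    (fun j => by rw [Polynomial.coeff_X_pow]; exact if_neg (by have := ht j; omega))]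
  congr 1
  funext j
  have h1 : t j + 1 - 1 = t j := by omega
  rw [h1, pQ_X_pow]

end ZqAux
end Stage6

open Finset Polynomial ZqAux in
/-- Z_q°[1] equals the ℚ-span of the brackets [s_1,…,s_l] with all s_j ≥ 2, and also
equals the ℚ-span of the Bradley–Zhao series
ζ^BZ_q(s_1,…,s_l) = ζ_q(s_1,…,s_l; t^{s_1−1},…,t^{s_l−1}) with all s_j ≥ 2. -/
theorem Zqc1_eq_span_brackets_ge_two :
    Zqc1 = Submodule.span ℚ {f | ∃ (l : ℕ) (s : Fin l → ℕ),
      (∀ j, 2 ≤ s j) ∧ f = biBracket l s (fun _ => 0)} ∧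
    Zqc1 = Submodule.span ℚ {f | ∃ (l : ℕ) (s : Fin l → ℕ),
      (∀ j, 2 ≤ s j) ∧ f = zetaQ l s (fun j => Polynomial.X ^ (s j - 1))} := by
  classical
  have hpQ_mem : ∀ (l : ℕ) (s : Fin l → ℕ) (Q : Fin l → Polynomial ℚ),
      (∀ j, 1 ≤ s j) → (∀ j, Q j = 0 ∨ (Q j).natDegree + 1 ≤ s j) →
      (∀ j, (Q j).coeff 0 = 0) → ∀ j, (pQ (s j - 1) (Q j)).coeff 0 = 0 := by
    intro l s Q hs hdeg h0 j
    rw [Polynomial.coeff_zero_eq_eval_zero]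
    refine pQ_eval_zero _ _ (h0 j) ?_
    rcases hdeg j with h | h
    · exact Or.inl h
    · right; omega
  -- generators made from FBZ polynomials are BZ generators, hence in both SBZ-span and Zqc1
  have hFBZ_gen : ∀ (l : ℕ) (q : Fin l → Polynomial ℚ), (∀ j, q j ∈ FBZ) →
      ∃ t : Fin l → ℕ, (∀ j, 1 ≤ t j) ∧
        Umap l q = zetaQ l (fun j => t j + 1) (fun j => Polynomial.X ^ (t j)) := by
    intro l q hq
    choose t ht hq' using hq
    refine ⟨t, ht, ?_⟩
    have hqe : q = fun j => gP (t j) (t j) := funext hq'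
    rw [hqe, ← BZ_eq l t ht]
  constructor
  · -- Zqc1 = span of brackets
    apply le_antisymm
    · rw [Zqc1]
      apply Submodule.span_le.2
      rintro f ⟨l, s, Q, hs, hdeg, h0, rfl⟩
      rw [zetaQ_eq_U l s Q hs hdeg h0]
      apply zgen_mem_span_of FB _ ?_ l _
        (fun j => mem_span_FB _ (hpQ_mem l s Q hs hdeg h0 j))
      rintro l' q hq
      choose t ht hq' using hq
      have hqe : q = fun j => pB (t j) := funext hq'
      rw [hqe, ← biBracket_eq_U l' t]
      exact Submodule.subset_span ⟨l', t, ht, rfl⟩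
    · apply Submodule.span_le.2
      rintro f ⟨l, s, hs2, rfl⟩
      rw [biBracket_eq_U l s]
      have hpB0 : ∀ j, (pB (s j)).coeff 0 = 0 := by
        intro j
        have hk : ¬ (0 = s j - 1) := by have := hs2 j; omega
        simp [pB, Polynomial.coeff_C_mul, Polynomial.coeff_X_pow, hk]
      apply zgen_mem_span_of FBZ Zqc1 ?_ l _ (fun j => mem_span_FBZ _ (hpB0 j))
      rintro l' q hq
      obtain ⟨t, ht, heq⟩ := hFBZ_gen l' q hq
      rw [heq, Zqc1]
      apply Submodule.subset_span
      refine ⟨l', (fun j => t j + 1), (fun j => Polynomial.X ^ (t j)),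
        fun j => by show 1 ≤ t j + 1; omega,
        fun j => Or.inr (by rw [Polynomial.natDegree_X_pow]),
        fun j => by rw [Polynomial.coeff_X_pow]; exact if_neg (by have := ht j; omega), rfl⟩
  · -- Zqc1 = span of Bradley–Zhao series
    apply le_antisymm
    · rw [Zqc1]
      apply Submodule.span_le.2
      rintro f ⟨l, s, Q, hs, hdeg, h0, rfl⟩
      rw [zetaQ_eq_U l s Q hs hdeg h0]
      apply zgen_mem_span_of FBZ _ ?_ l _
        (fun j => mem_span_FBZ _ (hpQ_mem l s Q hs hdeg h0 j))
      rintro l' q hq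
      obtain ⟨t, ht, heq⟩ := hFBZ_gen l' q hq
      rw [heq]
      apply Submodule.subset_span
      refine ⟨l', (fun j => t j + 1), fun j => by show 2 ≤ t j + 1; have := ht j; omega, ?_⟩
      have : (fun j => Polynomial.X ^ ((fun j => t j + 1) j - 1))
          = fun j : Fin l' => (Polynomial.X : Polynomial ℚ) ^ (t j) := by
        funext j
        simp
      rw [this]
    · apply Submodule.span_le.2
      rintro f ⟨l, s, hs2, rfl⟩
      rw [Zqc1]
      apply Submodule.subset_span
      refine ⟨l, s, (fun j => Polynomial.X ^ (s j - 1)), fun j => by have := hs2 j; omega,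
        fun j => Or.inr (by rw [Polynomial.natDegree_X_pow]; have := hs2 j; omega),
        fun j => by
          rw [Polynomial.coeff_X_pow]
          exact if_neg (by have := hs2 j; omega), rfl⟩
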